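/- For a random simple temporal graph on n vertices with edge probability p = log(n)/√n, the graph is temporally connected with probability at least 1 − n^{−(log n)/4 + 2}, for all n ≥ 4. -/

import Mathlib

/-- Temporal reachability: `TReachFrom G lab t u v` means there is a temporal
(non-decreasing-label) walk from `u` to `v` in `G` whose first edge has label `≥ t`. -/
inductive TReachFrom {V : Type*} (G : SimpleGraph V) (lab : Sym2 V → ℝ) : ℝ → V → V → Prop
  | refl (t : ℝ) (v : V) : TReachFrom G lab t v v
  | step {t : ℝ} {u v w : V} : G.Adj u v → t ≤ lab s(u, v) →
      TReachFrom G lab (lab s(u, v)) v w → TReachFrom G lab t u w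

/-- `u` reaches `v` by a temporal path. -/
def TReach {V : Type*} (G : SimpleGraph V) (lab : Sym2 V → ℝ) (u v : V) : Prop :=
  ∃ t, TReachFrom G lab t u v

/-- `v` is a temporal source: it reaches every vertex by a temporal path. -/
def TSource {V : Type*} (G : SimpleGraph V) (lab : Sym2 V → ℝ) (v : V) : Prop :=
  ∀ u, TReach G lab v u

/-- `v` is a temporal sink: every vertex reaches it by a temporal path. -/
def TSink {V : Type*} (G : SimpleGraph V) (lab : Sym2 V → ℝ) (v : V) : Prop :=
  ∀ u, TReach G lab u v
open MeasureTheory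

/-- The random simple temporal graph model: each of the `C(n,2)` potential edges of the
complete graph on `Fin n` carries an independent uniform label in `[0,1]`; the graph
`F_{n,p}` is recovered by keeping the edges with label at most `p` (the paper's coupling
of `F_{n,p}` as the restriction of `F_{n,1}` to labels in `[0,p]`; temporal reachability
only depends on presence of edges and the relative order of their labels). -/
noncomputable def rstgMeasure (n : ℕ) : Measure (Sym2 (Fin n) → ℝ) :=
  Measure.pi fun _ => volume.restrict (Set.Icc (0 : ℝ) 1)

/-- The graph of edges present by time `p`: those whose label is at most `p`. -/
def presentGraph {n : ℕ} (ω : Sym2 (Fin n) → ℝ) (p : ℝ) : SimpleGraph (Fin n) :=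
  SimpleGraph.fromEdgeSet {e | ω e ≤ p}

open Set Function
open scoped ENNReal NNReal

section Aux

theorem measurePreserving_comp_inj {ι κ : Type*} [Fintype ι] [Fintype κ]
    {α : Type*} [MeasurableSpace α] (μ : ι → Measure α) [∀ i, IsProbabilityMeasure (μ i)]
    (f : κ → ι) (hf : Function.Injective f) :
    MeasurePreserving (fun ω : ι → α => ω ∘ f) (Measure.pi μ) (Measure.pi (fun k => μ (f k))) := by
  classical
  let p : ι → Prop := fun i => i ∈ Set.range f
  let e : κ ≃ Subtype p := Equiv.ofInjective f hf
  let g : κ ⊕ {i // ¬ p i} ≃ ι := (Equiv.sumCongr e (Equiv.refl _)).trans (Equiv.sumCompl p)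
  have A := (measurePreserving_piCongrLeft (fun i : ι => μ i) g).symm
      (MeasurableEquiv.piCongrLeft (fun _ : ι => α) g)
  have B := measurePreserving_sumPiEquivProdPi (X := fun _ : κ ⊕ {i // ¬ p i} => α)
      (fun j => μ (g j))
  have C : MeasurePreserving Prod.fst
      ((Measure.pi fun k : κ => μ (g (Sum.inl k))).prod
        (Measure.pi fun j : {i // ¬ p i} => μ (g (Sum.inr j))))
      (Measure.pi fun k : κ => μ (g (Sum.inl k))) := by
    refine ⟨measurable_fst, ?_⟩
    rw [Measure.map_fst_prod]
    simp
  have hcomp := (C.comp B).comp A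
  have key : MeasurePreserving (fun ω : ι → α => ω ∘ f) (Measure.pi μ)
      (Measure.pi fun k : κ => μ (g (Sum.inl k))) := by
    convert hcomp using 1
    rfl
  exact key

theorem measurePreserving_pairMap {κ : Type*} [Fintype κ] {α : Type*} [MeasurableSpace α]
    (μ : Measure α) [SigmaFinite μ] :
    MeasurePreserving (fun (ω : κ × Bool → α) (z : κ) => (ω (z, false), ω (z, true)))
      (Measure.pi fun _ => μ) (Measure.pi fun _ : κ => μ.prod μ) := by
  let e : κ ⊕ κ ≃ κ × Bool :=
    { toFun := Sum.elim (·, false) (·, true)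
      invFun := fun q => cond q.2 (Sum.inr q.1) (Sum.inl q.1)
      left_inv := by rintro (z|z) <;> rfl
      right_inv := by rintro ⟨z, (_|_)⟩ <;> rfl }
  have A := (measurePreserving_piCongrLeft (fun _ : κ × Bool => μ) e).symm
      (MeasurableEquiv.piCongrLeft (fun _ : κ × Bool => α) e)
  have B := measurePreserving_sumPiEquivProdPi (X := fun _ : κ ⊕ κ => α)
      (fun _ => μ)
  have C := (measurePreserving_arrowProdEquivProdArrow α α κ (fun _ => μ) (fun _ => μ)).symm
      (MeasurableEquiv.arrowProdEquivProdArrow α α κ)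
  have hcomp := (C.comp B).comp A
  convert hcomp using 1
  all_goals rfl

noncomputable abbrev unif01 : Measure ℝ := volume.restrict (Set.Icc (0 : ℝ) 1)

instance : IsProbabilityMeasure unif01 := by
  constructor
  rw [Measure.restrict_apply MeasurableSet.univ]
  simp [Real.volume_Icc]

/-- The grouping map is measure preserving. -/
theorem measurePreserving_groupMap {n : ℕ} (x y : Fin n) (hxy : x ≠ y) :
    MeasurePreserving
      (fun ω : Sym2 (Fin n) → ℝ =>
        ((ω s(x, y), fun z : {z : Fin n // z ≠ x ∧ z ≠ y} => (ω s(x, z.1), ω s(z.1, y)))))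
      (rstgMeasure n)
      (unif01.prod (Measure.pi fun _ : {z : Fin n // z ≠ x ∧ z ≠ y} => unif01.prod unif01)) := by
  classical
  set M := {z : Fin n // z ≠ x ∧ z ≠ y}
  let f : Unit ⊕ M × Bool → Sym2 (Fin n) :=
    Sum.elim (fun _ => s(x, y)) (fun q => cond q.2 s(q.1.1, y) s(x, q.1.1))
  have hf : Function.Injective f := by
    rintro (⟨⟩ | ⟨⟨z, hz1, hz2⟩, (_ | _)⟩) (⟨⟩ | ⟨⟨w, hw1, hw2⟩, (_ | _)⟩) h <;>
      simp only [f, Sum.elim_inl, Sum.elim_inr, cond_false, cond_true, Sym2.eq_iff] at h <;>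
      first
        | rfl
        | (exfalso; tauto)
        | aesop
  have A := measurePreserving_comp_inj (fun _ : Sym2 (Fin n) => unif01) f hf
  have B := measurePreserving_sumPiEquivProdPi (X := fun _ : Unit ⊕ M × Bool => ℝ)
      (fun _ => unif01)
  have C := (measurePreserving_funUnique unif01 Unit).prod
      (measurePreserving_pairMap (κ := M) (α := ℝ) unif01)
  have hcomp := (C.comp B).comp A
  convert hcomp using 1
  all_goals rfl

lemma unif01_Iic {q : ℝ} (h0 : 0 ≤ q) (h1 : q ≤ 1) : unif01 (Iic q) = ENNReal.ofReal q := by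
  rw [Measure.restrict_apply measurableSet_Iic]
  have h : Iic q ∩ Icc 0 1 = Icc 0 q := by
    ext t
    simp only [mem_inter_iff, mem_Iic, mem_Icc]
    constructor
    · rintro ⟨h, h2, h3⟩; exact ⟨h2, h⟩
    · rintro ⟨h2, h⟩; exact ⟨h, h2, le_trans h h1⟩
  rw [h, Real.volume_Icc]
  simp

lemma unif01_Icc {a b : ℝ} (h0 : 0 ≤ a) (h1 : b ≤ 1) :
    unif01 (Icc a b) = ENNReal.ofReal (b - a) := by
  rw [Measure.restrict_apply measurableSet_Icc]
  have h : Icc a b ∩ Icc 0 1 = Icc a b := by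
    apply inter_eq_left.2
    intro t ht
    exact ⟨le_trans h0 ht.1, le_trans ht.2 h1⟩
  rw [h, Real.volume_Icc]

lemma unif01_Ioi {a : ℝ} (h0 : 0 ≤ a) : unif01 (Ioi a) = ENNReal.ofReal (1 - a) := by
  rw [Measure.restrict_apply measurableSet_Ioi]
  have h : Ioi a ∩ Icc 0 1 = Ioc a 1 := by
    ext t
    simp only [mem_inter_iff, mem_Ioi, mem_Icc, mem_Ioc]
    constructor
    · rintro ⟨h, _, h3⟩; exact ⟨h, h3⟩
    · rintro ⟨h, h3⟩; exact ⟨h, le_of_lt (lt_of_le_of_lt h0 h), h3⟩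
  rw [h, Real.volume_Ioc]

lemma card_M {n : ℕ} (x y : Fin n) (hxy : x ≠ y) :
    Fintype.card {z : Fin n // z ≠ x ∧ z ≠ y} = n - 2 := by
  classical
  rw [Fintype.card_subtype]
  have h : (Finset.univ.filter fun z : Fin n => z ≠ x ∧ z ≠ y) = ({x, y} : Finset (Fin n))ᶜ := by
    ext z
    simp [not_or]
  rw [h, Finset.card_compl, Finset.card_insert_of_notMem (by simpa using hxy),
    Finset.card_singleton, Fintype.card_fin]

lemma bad_bound {n : ℕ} {p : ℝ} (hp0 : 0 ≤ p) (hp1 : p ≤ 1) (x y : Fin n) (hxy : x ≠ y) :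
    rstgMeasure n {ω | ¬ (ω s(x, y) ≤ p ∨ ∃ z : Fin n, z ≠ x ∧ z ≠ y ∧
        ω s(x, z) ≤ p / 2 ∧ p / 2 ≤ ω s(z, y) ∧ ω s(z, y) ≤ p)} ≤
      ENNReal.ofReal (1 - p) *
        (1 - ENNReal.ofReal (p / 2) * ENNReal.ofReal (p / 2)) ^ (n - 2) := by
  classical
  have hΦ := measurePreserving_groupMap x y hxy
  set M := {z : Fin n // z ≠ x ∧ z ≠ y}
  set D : Set (ℝ × ℝ) := (Iic (p / 2) ×ˢ Icc (p / 2) p)ᶜ with hD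
  set T : Set (ℝ × (M → ℝ × ℝ)) := Ioi p ×ˢ univ.pi (fun _ => D) with hT
  have hTm : MeasurableSet T :=
    measurableSet_Ioi.prod (MeasurableSet.univ_pi fun _ =>
      (measurableSet_Iic.prod measurableSet_Icc).compl)
  have hsub : {ω : Sym2 (Fin n) → ℝ | ¬ (ω s(x, y) ≤ p ∨ ∃ z : Fin n, z ≠ x ∧ z ≠ y ∧
        ω s(x, z) ≤ p / 2 ∧ p / 2 ≤ ω s(z, y) ∧ ω s(z, y) ≤ p)} ⊆
      (fun ω : Sym2 (Fin n) → ℝ =>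
        ((ω s(x, y), fun z : M => (ω s(x, z.1), ω s(z.1, y))))) ⁻¹' T := by
    intro ω hω
    rw [mem_setOf_eq, not_or, not_exists] at hω
    obtain ⟨h1, h2⟩ := hω
    constructor
    · exact lt_of_not_ge h1
    · intro z _
      have hz := h2 z.1
      simp only [mem_compl_iff, mem_prod, mem_Iic, mem_Icc, D]
      intro hc
      exact hz ⟨z.2.1, z.2.2, hc.1, hc.2.1, hc.2.2⟩
  refine le_trans (measure_mono hsub) ?_
  rw [hΦ.measure_preimage hTm.nullMeasurableSet]
  have hDval : (unif01.prod unif01) D = 1 - ENNReal.ofReal (p / 2) * ENNReal.ofReal (p / 2) := by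
    rw [hD, measure_compl (measurableSet_Iic.prod measurableSet_Icc) (measure_ne_top _ _),
      Measure.prod_prod, unif01_Iic (by linarith) (by linarith),
      unif01_Icc (by linarith) hp1, measure_univ, show p - p / 2 = p / 2 from by ring]
  rw [hT, Measure.prod_prod, Measure.pi_pi, unif01_Ioi hp0]
  simp only [hDval, Finset.prod_const, Finset.card_univ]
  rw [card_M x y hxy]

lemma reach_of_good {n : ℕ} {p : ℝ} (hp0 : 0 ≤ p) (ω : Sym2 (Fin n) → ℝ) (x y : Fin n)
    (hxy : x ≠ y)
    (h : ω s(x, y) ≤ p ∨ ∃ z : Fin n, z ≠ x ∧ z ≠ y ∧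
        ω s(x, z) ≤ p / 2 ∧ p / 2 ≤ ω s(z, y) ∧ ω s(z, y) ≤ p) :
    TReach (presentGraph ω p) ω x y := by
  rcases h with h | ⟨z, hzx, hzy, h1, h2, h3⟩
  · have adj : (presentGraph ω p).Adj x y := by
      rw [presentGraph, SimpleGraph.fromEdgeSet_adj]
      exact ⟨h, hxy⟩
    exact ⟨ω s(x, y), .step adj le_rfl (.refl _ _)⟩
  · have adj1 : (presentGraph ω p).Adj x z := by
      rw [presentGraph, SimpleGraph.fromEdgeSet_adj]
      exact ⟨le_trans h1 (by linarith), fun h => hzx h.symm⟩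
    have adj2 : (presentGraph ω p).Adj z y := by
      rw [presentGraph, SimpleGraph.fromEdgeSet_adj]
      exact ⟨h3, hzy⟩
    exact ⟨ω s(x, z), .step adj1 le_rfl (.step adj2 (le_trans h1 h2) (.refl _ _))⟩

lemma log_le_sqrt' {t : ℝ} (ht : 1 ≤ t) : Real.log t ≤ Real.sqrt t := by
  have ht0 : 0 < t := by linarith
  set u : ℝ := t ^ (1/4 : ℝ) with hu
  have hu0 : 0 < u := Real.rpow_pos_of_pos ht0 _
  have h4 : Real.log t = 4 * Real.log u := by
    rw [hu, Real.log_rpow ht0]; ring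
  have hlogu : Real.log u ≤ u - 1 := Real.log_le_sub_one_of_pos hu0
  have hsq : Real.sqrt t = u ^ 2 := by
    rw [hu, ← Real.rpow_natCast (t ^ (1/4 : ℝ)) 2, ← Real.rpow_mul (le_of_lt ht0)]
    norm_num
    rw [Real.sqrt_eq_rpow]
  rw [h4, hsq]
  nlinarith [sq_nonneg (u - 2)]

lemma final_numeric {n : ℕ} (hn : 4 ≤ n) {p : ℝ} (hp : p = Real.log n / Real.sqrt n) :
    (n : ℝ) * n * (Real.exp (-p) * Real.exp (-(p ^ 2 / 4)) ^ (n - 2)) ≤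
      (n : ℝ) ^ (-(Real.log n) / 4 + 2) := by
  have hn0 : (0 : ℝ) < n := by
    have : (4 : ℝ) ≤ n := by exact_mod_cast hn
    linarith
  have hn1 : (1 : ℝ) < n := by
    have : (4 : ℝ) ≤ n := by exact_mod_cast hn
    linarith
  have hs0 : 0 < Real.sqrt n := Real.sqrt_pos.2 hn0
  have hlog : 0 < Real.log n := Real.log_pos hn1
  have hp0 : 0 < p := by rw [hp]; positivity
  have hp1 : p ≤ 1 := by
    rw [hp, div_le_one hs0]
    exact log_le_sqrt' (by linarith)
  have hps : p * Real.sqrt n = Real.log n := by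
    rw [hp]; field_simp
  have hsq : Real.sqrt n ^ 2 = (n : ℝ) := Real.sq_sqrt (le_of_lt hn0)
  have hlogsq : Real.log n ^ 2 = (n : ℝ) * p ^ 2 := by
    rw [← hps, mul_pow, hsq]; ring
  have hm : ((n - 2 : ℕ) : ℝ) = (n : ℝ) - 2 := by
    rw [Nat.cast_sub (by omega)]; norm_num
  have hexp : Real.exp (-p) * Real.exp (-(p ^ 2 / 4)) ^ (n - 2)
      = Real.exp (-p + ((n : ℝ) - 2) * (-(p ^ 2 / 4))) := by
    rw [← Real.exp_nat_mul, ← Real.exp_add, hm]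
  have hnn : (n : ℝ) * n = Real.exp (Real.log n + Real.log n) := by
    rw [Real.exp_add, Real.exp_log hn0]
  rw [hexp, hnn, ← Real.exp_add, Real.rpow_def_of_pos hn0, Real.exp_le_exp]
  have key : p ^ 2 / 2 ≤ p := by nlinarith
  nlinarith [hlogsq]

end Aux

/-- For the random simple temporal graph on `n ≥ 4` vertices with
edge probability `p = log(n)/√n`, the graph is temporally connected (every ordered
pair of vertices is joined by a temporal path) with probability at least
`1 - n^{-(log n)/4 + 2}`. -/
theorem rstg_temporally_connected (n : ℕ) (hn : 4 ≤ n) (p : ℝ)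
    (hp : p = Real.log n / Real.sqrt n) :
    ENNReal.ofReal (1 - (n : ℝ) ^ (-(Real.log n) / 4 + 2)) ≤
      rstgMeasure n {ω | ∀ x y : Fin n, TReach (presentGraph ω p) ω x y} := by
  classical
  have hn0 : (0 : ℝ) < n := by
    have : (4 : ℝ) ≤ n := by exact_mod_cast hn
    linarith
  have hn1 : (1 : ℝ) < n := by
    have : (4 : ℝ) ≤ n := by exact_mod_cast hn
    linarith
  have hs0 : 0 < Real.sqrt n := Real.sqrt_pos.2 hn0
  have hp0 : 0 ≤ p := by rw [hp]; positivity
  have hp1 : p ≤ 1 := by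
    rw [hp, div_le_one hs0]
    exact log_le_sqrt' (by linarith)
  haveI : IsProbabilityMeasure (rstgMeasure n) := by
    unfold rstgMeasure; infer_instance
  set μ := rstgMeasure n with hμ
  set G : Set (Sym2 (Fin n) → ℝ) :=
    {ω | ∀ x y : Fin n, TReach (presentGraph ω p) ω x y} with hG
  set E : ℝ := Real.exp (-p) * Real.exp (-(p ^ 2 / 4)) ^ (n - 2) with hE
  set Bd : Fin n → Fin n → Set (Sym2 (Fin n) → ℝ) := fun x y =>
    if x = y then ∅ else {ω | ¬ (ω s(x, y) ≤ p ∨ ∃ z : Fin n, z ≠ x ∧ z ≠ y ∧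
        ω s(x, z) ≤ p / 2 ∧ p / 2 ≤ ω s(z, y) ∧ ω s(z, y) ≤ p)} with hBdDef
  have hGc : Gᶜ ⊆ ⋃ x, ⋃ y, Bd x y := by
    intro ω hω
    simp only [hG, mem_compl_iff, mem_setOf_eq] at hω
    push_neg at hω
    obtain ⟨x, y, hxy⟩ := hω
    have hne : x ≠ y := by
      rintro rfl
      exact hxy ⟨0, .refl 0 x⟩
    refine mem_iUnion.2 ⟨x, mem_iUnion.2 ⟨y, ?_⟩⟩
    simp only [hBdDef, if_neg hne, mem_setOf_eq]
    intro hgood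
    exact hxy (reach_of_good hp0 ω x y hne hgood)
  have hBd : ∀ x y : Fin n, μ (Bd x y) ≤ ENNReal.ofReal E := by
    intro x y
    by_cases hxy : x = y
    · simp [hBdDef, hxy]
    · simp only [hBdDef, if_neg hxy]
      refine le_trans (bad_bound hp0 hp1 x y hxy) ?_
      rw [hE, ENNReal.ofReal_mul (Real.exp_nonneg _), ENNReal.ofReal_pow (Real.exp_nonneg _)]
      refine mul_le_mul' ?_ ?_
      · exact ENNReal.ofReal_le_ofReal (by nlinarith [Real.add_one_le_exp (-p)])
      · refine pow_le_pow_left' ?_ _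
        have hle1 : p / 2 * (p / 2) ≤ 1 := by nlinarith
        rw [← ENNReal.ofReal_mul (by linarith)]
        have step1 : (1 : ℝ≥0∞) - ENNReal.ofReal (p / 2 * (p / 2)) ≤
            ENNReal.ofReal (1 - p / 2 * (p / 2)) := by
          rw [tsub_le_iff_right, ← ENNReal.ofReal_add (by linarith) (by positivity)]
          simp
        refine le_trans step1 (ENNReal.ofReal_le_ofReal ?_)
        have := Real.add_one_le_exp (-(p ^ 2 / 4))
        nlinarith
  have hsum : μ Gᶜ ≤ (n : ℝ≥0∞) * n * ENNReal.ofReal E := by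
    refine le_trans (measure_mono hGc) ?_
    refine le_trans (measure_iUnion_le _) ?_
    refine le_trans (ENNReal.tsum_le_tsum fun x => measure_iUnion_le _) ?_
    have step : ∀ x : Fin n, ∑' y : Fin n, μ (Bd x y) ≤ (n : ℝ≥0∞) * ENNReal.ofReal E := by
      intro x
      refine le_trans (ENNReal.tsum_le_tsum fun y => hBd x y) ?_
      rw [tsum_fintype]
      simp [Finset.sum_const, Finset.card_univ, nsmul_eq_mul]
    refine le_trans (ENNReal.tsum_le_tsum step) ?_
    rw [tsum_fintype]
    simp only [Finset.sum_const, Finset.card_univ, Fintype.card_fin, nsmul_eq_mul]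
    rw [mul_assoc]
  have hnum : (n : ℝ) * n * E ≤ (n : ℝ) ^ (-(Real.log n) / 4 + 2) := final_numeric hn hp
  have hμGc : μ Gᶜ ≤ ENNReal.ofReal ((n : ℝ) ^ (-(Real.log n) / 4 + 2)) := by
    refine le_trans hsum (le_trans ?_ (ENNReal.ofReal_le_ofReal hnum))
    rw [← ENNReal.ofReal_natCast n, ← ENNReal.ofReal_mul (by positivity),
      ← ENNReal.ofReal_mul (by positivity)]
  have h1 : ENNReal.ofReal (1 - (n : ℝ) ^ (-(Real.log n) / 4 + 2)) ≤
      1 - ENNReal.ofReal ((n : ℝ) ^ (-(Real.log n) / 4 + 2)) := by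
    rw [ENNReal.ofReal_sub _ (by positivity)]
    simp
  refine le_trans h1 ?_
  refine le_trans (tsub_le_tsub_left hμGc 1) ?_
  rw [tsub_le_iff_right]
  calc (1 : ℝ≥0∞) = μ (G ∪ Gᶜ) := by rw [union_compl_self, measure_univ]
    _ ≤ μ G + μ Gᶜ := measure_union_le _ _
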